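/- With p₁, p₂', p₃, p_g > 0 and p_h = p₁ + p₂' + p₃ ≤ 1, p_g ≤ 1, the lower-bound expression p_g(p₁+p₂')/((p₁+p₂') + p_g(1 + p₂'/(p₁+p₂'))) is strictly less than the upper-bound expression p_g p_h/(p_h + p_g(1 + (p₂'+p₃)/p_h)). -/

import Mathlib

/-- With `p₁, p₂', p₃, p_g > 0`, `p_h = p₁ + p₂' + p₃ ≤ 1`, `p_g ≤ 1`, the lower bound
`p_g(p₁+p₂')/((p₁+p₂') + p_g(1 + p₂'/(p₁+p₂')))` is strictly less than the upper bound
`p_g p_h/(p_h + p_g(1 + (p₂'+p₃)/p_h))`. -/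
theorem stmt6 (p1 p2' p3 pg ph : ℝ) (hp1 : 0 < p1) (hp2' : 0 < p2') (hp3 : 0 < p3)
    (hpg : 0 < pg) (hph : ph = p1 + p2' + p3) (hph1 : ph ≤ 1) (hpg1 : pg ≤ 1) :
    pg * (p1 + p2') / ((p1 + p2') + pg * (1 + p2' / (p1 + p2')))
      < pg * ph / (ph + pg * (1 + (p2' + p3) / ph)) := by
  subst hph
  have ha : 0 < p1 + p2' := by linarith
  have hb : 0 < p1 + p2' + p3 := by linarith
  have hd1 : 0 < (p1 + p2') + pg * (1 + p2' / (p1 + p2')) := by positivity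
  have hd2 : 0 < (p1 + p2' + p3) + pg * (1 + (p2' + p3) / (p1 + p2' + p3)) := by
    positivity
  rw [div_lt_div_iff₀ hd1 hd2]
  have h1 : p2' / (p1 + p2') * (p1 + p2') = p2' := div_mul_cancel₀ _ (ne_of_gt ha)
  have h2 : (p2' + p3) / (p1 + p2' + p3) * (p1 + p2' + p3) = p2' + p3 :=
    div_mul_cancel₀ _ (ne_of_gt hb)
  field_simp
  have key : (p1 + p2') * (p1 + p2') * ((p1 + p2' + p3) + (p2' + p3))
      < (p1 + p2' + p3) * (p1 + p2' + p3) * ((p1 + p2') + p2') := by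
    nlinarith [mul_pos (mul_pos ha hp3) hp3,
      mul_pos (mul_pos hp2' hp3) (by linarith : (0:ℝ) < (p1 + p2') + (p1 + p2' + p3))]
  nlinarith [mul_lt_mul_of_pos_left key (mul_pos hpg hpg)]
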